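/- Let (C, Δ, ε, [−,−,−]) be a Hopf heap over a field k and let x ∈ C be a group-like element. Define a·b := [a,x,b] and S_x(a) := [x,a,x] for a,b ∈ C. Then (C, ·, x, Δ, ε, S_x) is a Hopf algebra: the product · is associative with two-sided unit x, Δ and ε are algebra maps (Δ(a·b) = (a₁·b₁) ⊗ (a₂·b₂), Δ(x) = x ⊗ x, ε(a·b) = ε(a)ε(b), ε(x) = 1), and S_x(a₁)·a₂ = ε(a)x = a₁·S_x(a₂) for all a ∈ C. -/
import Mathlib


open TensorProduct

noncomputable section

variable (k : Type*) [Field k]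

section Shuffles

variable (A B P Q R S : Type*)
  [AddCommGroup A] [Module k A] [AddCommGroup B] [Module k B]
  [AddCommGroup P] [Module k P] [AddCommGroup Q] [Module k Q]
  [AddCommGroup R] [Module k R] [AddCommGroup S] [Module k S]

/-- `(a ⊗ b) ⊗ ((p ⊗ q) ⊗ (r ⊗ s)) ↦ (a ⊗ (q ⊗ r)) ⊗ (b ⊗ (p ⊗ s))`, the shuffle appearing in
the compatibility of a Hopf-heap bracket with comultiplication:
`Δ([a,b,c]) = [a₁,b₂,c₁] ⊗ [a₂,b₁,c₂]`. -/
def sweedlerShuffle :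
    ((A ⊗[k] B) ⊗[k] ((P ⊗[k] Q) ⊗[k] (R ⊗[k] S))) →ₗ[k]
      ((A ⊗[k] (Q ⊗[k] R)) ⊗[k] (B ⊗[k] (P ⊗[k] S))) :=
  (tensorTensorTensorComm k A B (Q ⊗[k] R) (P ⊗[k] S)).toLinearMap ∘ₗ
    (TensorProduct.map LinearMap.id
      ((tensorTensorTensorComm k Q P R S).toLinearMap ∘ₗ
        TensorProduct.map (TensorProduct.comm k P Q).toLinearMap LinearMap.id))

/-- `u₁ ⊗ (u₂ ⊗ (u₃ ⊗ u₄)) ↦ (u₁ ⊗ (u₄ ⊗ u₂)) ⊗ u₃`, the shuffle appearing in the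
Rota–Baxter identity. -/
def rbShuffle :
    (A ⊗[k] (P ⊗[k] (Q ⊗[k] R))) →ₗ[k] ((A ⊗[k] (R ⊗[k] P)) ⊗[k] Q) :=
  (TensorProduct.assoc k A (R ⊗[k] P) Q).symm.toLinearMap ∘ₗ
    TensorProduct.map LinearMap.id
      ((TensorProduct.comm k Q (R ⊗[k] P)).toLinearMap ∘ₗ
        (TensorProduct.assoc k Q R P).toLinearMap ∘ₗ
        (TensorProduct.comm k P (Q ⊗[k] R)).toLinearMap)

end Shuffles

section Mul

variable {C : Type*} [AddCommGroup C] [Module k C]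

/-- Right multiplication `a ↦ μ (a ⊗ b)` by a fixed element, for a bilinear product `μ`. -/
def rmulBy (μ : (C ⊗[k] C) →ₗ[k] C) (b : C) : C →ₗ[k] C :=
  μ ∘ₗ ((TensorProduct.mk k C C).flip b)

end Mul

section Heap

variable {C : Type*} [AddCommGroup C] [Module k C] [Coalgebra k C]

/-- Iterated comultiplication `a ↦ a₁ ⊗ (a₂ ⊗ a₃)`. -/
def comul2 : C →ₗ[k] (C ⊗[k] (C ⊗[k] C)) :=
  (TensorProduct.map LinearMap.id Coalgebra.comul) ∘ₗ Coalgebra.comul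

/-- Iterated comultiplication `a ↦ a₁ ⊗ (a₂ ⊗ (a₃ ⊗ a₄))`. -/
def comul3 : C →ₗ[k] (C ⊗[k] (C ⊗[k] (C ⊗[k] C))) :=
  (TensorProduct.map LinearMap.id (comul2 k)) ∘ₗ Coalgebra.comul

/-- The pointwise ternary bracket `[a,b,c]` of a Hopf heap with structure map `χ`. -/
def br (χ : (C ⊗[k] (C ⊗[k] C)) →ₗ[k] C) (a b c : C) : C := χ (a ⊗ₜ[k] (b ⊗ₜ[k] c))

/-- `x` is a group-like element of the coalgebra `C`. -/
def IsGrouplike (x : C) : Prop :=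
  Coalgebra.comul (R := k) x = x ⊗ₜ[k] x ∧ Coalgebra.counit (R := k) x = 1

/-- `(C, Δ, ε, χ)` is a Hopf heap: `χ` is a coalgebra map `C ⊗ C^cop ⊗ C → C`
(counit and comultiplication conditions, the latter in the Sweedler form
`Δ([a,b,c]) = [a₁,b₂,c₁] ⊗ [a₂,b₁,c₂]`), the bracket is associative
(`[[a,b,c],d,h] = [a,b,[c,d,h]]`), and `[c₁,c₂,a] = ε(c)a = [a,c₁,c₂]`. -/
structure IsHopfHeap (χ : (C ⊗[k] (C ⊗[k] C)) →ₗ[k] C) : Prop where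
  counit_br : ∀ a b c : C,
    Coalgebra.counit (R := k) (br k χ a b c) =
      Coalgebra.counit (R := k) a * Coalgebra.counit (R := k) b * Coalgebra.counit (R := k) c
  comul_br : ∀ a b c : C,
    Coalgebra.comul (R := k) (br k χ a b c) =
      TensorProduct.map χ χ (sweedlerShuffle k C C C C C C
        ((Coalgebra.comul (R := k) a) ⊗ₜ[k]
          ((Coalgebra.comul (R := k) b) ⊗ₜ[k] (Coalgebra.comul (R := k) c))))
  assoc_br : ∀ a b c d h : C,
    br k χ (br k χ a b c) d h = br k χ a b (br k χ c d h)
  left_cancel : ∀ c a : C,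
    χ ((TensorProduct.assoc k C C C) ((Coalgebra.comul (R := k) c) ⊗ₜ[k] a)) =
      Coalgebra.counit (R := k) c • a
  right_cancel : ∀ c a : C,
    χ (a ⊗ₜ[k] (Coalgebra.comul (R := k) c)) = Coalgebra.counit (R := k) c • a

/-- `B` is a Rota–Baxter operator on the Hopf heap `(C, Δ, χ)`:
`B [a,b,c] = [B a, B b, B c]` and
`B(a₁) ⊗ B(a₂) = [B(a)₁, B(B(a)₄), B(B(a)₂)] ⊗ B(a)₃`. -/
structure IsRBOp (χ : (C ⊗[k] (C ⊗[k] C)) →ₗ[k] C) (B : C →ₗ[k] C) : Prop where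
  map_br : ∀ a b c : C, B (br k χ a b c) = br k χ (B a) (B b) (B c)
  rb : ∀ a : C,
    TensorProduct.map B B (Coalgebra.comul (R := k) a) =
      TensorProduct.map (χ ∘ₗ TensorProduct.map LinearMap.id (TensorProduct.map B B))
        LinearMap.id (rbShuffle k C C C C (comul3 k (B a)))

/-- The multiplication `a ·ₓ b = [a, x, b]` of the Hopf algebra `H_x(C)`, as a linear map. -/
def heapMul (χ : (C ⊗[k] (C ⊗[k] C)) →ₗ[k] C) (x : C) : (C ⊗[k] C) →ₗ[k] C :=
  χ ∘ₗ TensorProduct.map LinearMap.id (TensorProduct.mk k C C x)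

/-- The antipode `S_x(a) = [x, a, x]` of the Hopf algebra `H_x(C)`, as a linear map. -/
def heapAntipode (χ : (C ⊗[k] (C ⊗[k] C)) →ₗ[k] C) (x : C) : C →ₗ[k] C :=
  χ ∘ₗ (TensorProduct.mk k C (C ⊗[k] C) x) ∘ₗ ((TensorProduct.mk k C C).flip x)

end Heap

section HeapHom

variable {C D : Type*} [AddCommGroup C] [Module k C] [Coalgebra k C]
  [AddCommGroup D] [Module k D] [Coalgebra k D]

/-- `f` is a homomorphism of Hopf heaps: a coalgebra map preserving the bracket. -/
def IsHeapHom (χC : (C ⊗[k] (C ⊗[k] C)) →ₗ[k] C) (χD : (D ⊗[k] (D ⊗[k] D)) →ₗ[k] D)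
    (f : C →ₗ[k] D) : Prop :=
  (∀ a : C, Coalgebra.comul (R := k) (f a) = TensorProduct.map f f (Coalgebra.comul (R := k) a)) ∧
  (∀ a : C, Coalgebra.counit (R := k) (f a) = Coalgebra.counit (R := k) a) ∧
  (∀ a b c : C, f (br k χC a b c) = br k χD (f a) (f b) (f c))

end HeapHom

section HopfAlg

variable (H : Type*) [Ring H] [HopfAlgebra k H]

/-- The Hopf-heap structure map `a ⊗ b ⊗ c ↦ a · S(b) · c` of a Hopf algebra. -/
def hopfHeapChi : (H ⊗[k] (H ⊗[k] H)) →ₗ[k] H :=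
  (LinearMap.mul' k H) ∘ₗ TensorProduct.map LinearMap.id
    ((LinearMap.mul' k H) ∘ₗ TensorProduct.map (HopfAlgebra.antipode (R := k)) LinearMap.id)

/-- The triple multiplication `a ⊗ (b ⊗ c) ↦ a·(b·c)`. -/
def mulTriple : (H ⊗[k] (H ⊗[k] H)) →ₗ[k] H :=
  (LinearMap.mul' k H) ∘ₗ TensorProduct.map LinearMap.id (LinearMap.mul' k H)

end HopfAlg

end
/-- for a Hopf heap `(C, χ)` and a group-like `x`, the product `a·b := [a,x,b]`
with unit `x` and antipode `S_x(a) := [x,a,x]` makes `C` a Hopf algebra `H_x(C)`. -/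
theorem hopfHeap_gives_hopfAlgebra {k : Type*} [Field k] {C : Type*} [AddCommGroup C]
    [Module k C] [Coalgebra k C] (χ : (C ⊗[k] (C ⊗[k] C)) →ₗ[k] C)
    (hχ : IsHopfHeap k χ) (x : C) (hx : IsGrouplike k x) :
    -- the product as a linear map is given by the bracket
    (∀ a b : C, heapMul k χ x (a ⊗ₜ[k] b) = br k χ a x b) ∧
    -- associativity
    (∀ a b c : C, br k χ (br k χ a x b) x c = br k χ a x (br k χ b x c)) ∧
    -- `x` is a two-sided unit
    (∀ a : C, br k χ x x a = a ∧ br k χ a x x = a) ∧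
    -- `Δ` is an algebra map: `Δ(a·b) = (a₁·b₁) ⊗ (a₂·b₂)` and `Δ(x) = x ⊗ x`
    (∀ a b : C,
      Coalgebra.comul (R := k) (heapMul k χ x (a ⊗ₜ[k] b)) =
        TensorProduct.map (heapMul k χ x) (heapMul k χ x)
          ((tensorTensorTensorComm k C C C C)
            ((Coalgebra.comul (R := k) a) ⊗ₜ[k] (Coalgebra.comul (R := k) b)))) ∧
    (Coalgebra.comul (R := k) x = x ⊗ₜ[k] x) ∧
    -- `ε` is an algebra map: `ε(a·b) = ε(a)ε(b)` and `ε(x) = 1`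
    (∀ a b : C,
      Coalgebra.counit (R := k) (heapMul k χ x (a ⊗ₜ[k] b)) =
        Coalgebra.counit (R := k) a * Coalgebra.counit (R := k) b) ∧
    (Coalgebra.counit (R := k) x = 1) ∧
    -- antipode: `S_x(a₁)·a₂ = ε(a)x = a₁·S_x(a₂)`
    (∀ a : C,
      heapMul k χ x (TensorProduct.map (heapAntipode k χ x) LinearMap.id
          (Coalgebra.comul (R := k) a)) = Coalgebra.counit (R := k) a • x ∧
      heapMul k χ x (TensorProduct.map LinearMap.id (heapAntipode k χ x)
          (Coalgebra.comul (R := k) a)) = Coalgebra.counit (R := k) a • x) := by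
  obtain ⟨hx1, hx2⟩ := hx
  have hmul : ∀ a b : C, heapMul k χ x (a ⊗ₜ[k] b) = br k χ a x b := by
    intro a b; simp [heapMul, br]
  have hunitl : ∀ a : C, br k χ x x a = a := by
    intro a
    have h := hχ.left_cancel x a
    rw [hx1, hx2, one_smul] at h
    simpa [br] using h
  have hunitr : ∀ a : C, br k χ a x x = a := by
    intro a
    have h := hχ.right_cancel x a
    rw [hx1, hx2, one_smul] at h
    simpa [br] using h
  refine ⟨hmul, fun a b c => hχ.assoc_br a x b x c, fun a => ⟨hunitl a, hunitr a⟩, ?_, hx1, ?_, hx2, ?_⟩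
  · intro a b
    rw [hmul, hχ.comul_br, hx1]
    have key : ∀ s t : C ⊗[k] C,
        TensorProduct.map χ χ (sweedlerShuffle k C C C C C C (s ⊗ₜ[k] ((x ⊗ₜ[k] x) ⊗ₜ[k] t))) =
          TensorProduct.map (heapMul k χ x) (heapMul k χ x)
            ((tensorTensorTensorComm k C C C C) (s ⊗ₜ[k] t)) := by
      intro s t
      induction s with
      | zero => simp
      | add u v hu hv =>
        simp only [add_tmul, map_add, hu, hv]
      | tmul a₁ a₂ =>
        induction t with
        | zero => simp
        | add u v hu hv =>
          simp only [tmul_add, map_add, hu, hv]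
        | tmul b₁ b₂ =>
          simp [sweedlerShuffle, heapMul, br, tensorTensorTensorComm]
    exact key _ _
  · intro a b
    rw [hmul, hχ.counit_br, hx2, mul_one]
  · intro a
    constructor
    · have key : ∀ t : C ⊗[k] C,
          heapMul k χ x (TensorProduct.map (heapAntipode k χ x) LinearMap.id t) =
            χ (x ⊗ₜ[k] t) := by
        intro t
        induction t with
        | zero => simp
        | add u v hu hv => simp only [map_add, tmul_add, hu, hv]
        | tmul u v =>
          have : heapMul k χ x ((heapAntipode k χ x u) ⊗ₜ[k] v) = br k χ (br k χ x u x) x v := by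
            rw [hmul]; rfl
          simp only [TensorProduct.map_tmul, LinearMap.id_apply, this,
            hχ.assoc_br, hunitl]
          rfl
      rw [key, hχ.right_cancel a x]
    · have key : ∀ t : C ⊗[k] C,
          heapMul k χ x (TensorProduct.map LinearMap.id (heapAntipode k χ x) t) =
            χ ((TensorProduct.assoc k C C C) (t ⊗ₜ[k] x)) := by
        intro t
        induction t with
        | zero => simp
        | add u v hu hv => simp only [map_add, add_tmul, hu, hv]
        | tmul u v =>
          have h1 : heapMul k χ x (u ⊗ₜ[k] (heapAntipode k χ x v)) = br k χ u x (br k χ x v x) := by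
            rw [hmul]; rfl
          simp only [TensorProduct.map_tmul, LinearMap.id_apply, h1,
            ← hχ.assoc_br, hunitr, TensorProduct.assoc_tmul]
          rfl
      rw [key, hχ.left_cancel a x]
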